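/- The class group of A (the group of invertible fractional ideals of A modulo principal fractional ideals) is divisible: for every class c in the class group of A and every integer n ≥ 1 there exists a class d with n • d = c. -/

import Mathlib

set_option synthInstance.maxHeartbeats 1000000
set_option maxHeartbeats 1000000

open FractionalIdeal nonZeroDivisors Pointwise in
/-- Let `A` be the integral closure of `k[t]` in an algebraic closure `Ω` of
`k(t)`, `k` algebraically closed.  The class group of `A` (invertible fractional ideals modulo
principal ones) is divisible: every class is an `n`-th multiple for every `n ≥ 1` (written
multiplicatively: every class has an `n`-th root). -/
theorem classGroup_divisible
    (k : Type*) [Field k] [IsAlgClosed k]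
    (Ω : Type*) [Field Ω] [Algebra (Polynomial k) Ω] [Algebra (RatFunc k) Ω]
    [IsScalarTower (Polynomial k) (RatFunc k) Ω] [IsAlgClosure (RatFunc k) Ω]
    (c : ClassGroup (integralClosure (Polynomial k) Ω)) (n : ℕ) (hn : 1 ≤ n) :
    ∃ d : ClassGroup (integralClosure (Polynomial k) Ω), d ^ n = c := by
  set A := integralClosure (Polynomial k) Ω with hA
  have hn0 : n ≠ 0 := by omega
  haveI : IsAlgClosed Ω := IsAlgClosure.isAlgClosed (RatFunc k)
  haveI : Algebra.IsAlgebraic (Polynomial k) Ω :=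
    IsFractionRing.comap_isAlgebraic_iff.mpr
      (inferInstance : Algebra.IsAlgebraic (RatFunc k) Ω)
  have hinj : ∀ x : Polynomial k, algebraMap (Polynomial k) Ω x = 0 → x = 0 := by
    intro x hx
    rw [IsScalarTower.algebraMap_apply (Polynomial k) (RatFunc k) Ω] at hx
    exact IsFractionRing.injective (Polynomial k) (RatFunc k)
      (by rw [(algebraMap (RatFunc k) Ω).injective.eq_iff' (map_zero _)] at hx
          simpa using hx)
  haveI : IsFractionRing (↥A) Ω := integralClosure.isFractionRing_of_algebraic hinj
  -- roots stay in `A`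
  have hroot_closed : ∀ x : Ω, x ^ n ∈ (1 : FractionalIdeal (↥A)⁰ Ω) →
      x ∈ (1 : FractionalIdeal (↥A)⁰ Ω) := by
    intro x hx
    rw [FractionalIdeal.mem_one_iff] at hx ⊢
    obtain ⟨a, ha⟩ := hx
    have hxA : IsIntegral (↥A) x :=
      ⟨Polynomial.X ^ n - Polynomial.C a, Polynomial.monic_X_pow_sub_C a hn0, by
        simp [ha]⟩
    have hxR : IsIntegral (Polynomial k) x := isIntegral_trans x hxA
    exact ⟨⟨x, hxR⟩, rfl⟩
  refine ClassGroup.induction (R := ↥A) Ω (fun I => ?_) c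
  -- the key cancellation property
  have key : ∀ y : Ω, y ^ n ∈ ((I : FractionalIdeal (↥A)⁰ Ω) ^ n) →
      y ∈ (I : FractionalIdeal (↥A)⁰ Ω) := by
    intro y hy
    set M := spanSingleton (↥A)⁰ y * ((I⁻¹ : (FractionalIdeal (↥A)⁰ Ω)ˣ) : FractionalIdeal (↥A)⁰ Ω)
      with hM
    have hMn : M ^ n ≤ 1 := by
      rw [hM, mul_pow, spanSingleton_pow]
      calc spanSingleton (↥A)⁰ (y ^ n) * (↑I⁻¹ : FractionalIdeal (↥A)⁰ Ω) ^ n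
          ≤ (↑I : FractionalIdeal (↥A)⁰ Ω) ^ n * (↑I⁻¹ : FractionalIdeal (↥A)⁰ Ω) ^ n :=
            mul_le_mul_of_nonneg_right (spanSingleton_le_iff_mem.mpr hy) (zero_le _)
        _ = 1 := by rw [← mul_pow, Units.mul_inv, one_pow]
    have hM1 : M ≤ 1 := by
      intro z hz
      refine hroot_closed z (hMn ?_)
      show z ^ n ∈ ((M ^ n : FractionalIdeal (↥A)⁰ Ω) : Submodule (↥A) Ω)
      rw [FractionalIdeal.coe_pow]
      exact Submodule.pow_mem_pow _ hz n
    have hspan : spanSingleton (↥A)⁰ y = M * ↑I := by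
      rw [hM, mul_assoc, Units.inv_mul, mul_one]
    have : spanSingleton (↥A)⁰ y ≤ ↑I := by
      rw [hspan]
      calc M * ↑I ≤ 1 * ↑I := mul_le_mul_of_nonneg_right hM1 (zero_le _)
        _ = ↑I := one_mul _
    exact spanSingleton_le_iff_mem.mp this
  -- the candidate `n`-th root
  set S : Set Ω := {x : Ω | x ^ n ∈ (I : FractionalIdeal (↥A)⁰ Ω)} with hS
  obtain ⟨d₀, hd₀, hdI⟩ := (I : FractionalIdeal (↥A)⁰ Ω).isFractional
  have hJfrac : IsFractional (↥A)⁰ (Submodule.span (↥A) S) := by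
    rw [isFractional_span_iff]
    refine ⟨d₀, hd₀, fun b hb => ?_⟩
    obtain ⟨c₀, hc₀⟩ := hdI (b ^ n) (FractionalIdeal.mem_coe.mpr hb)
    have hpow : (d₀ • b) ^ n = algebraMap (↥A) Ω (d₀ ^ (n - 1) * c₀) := by
      calc (d₀ • b) ^ n = (algebraMap (↥A) Ω d₀) ^ n * b ^ n := by
            rw [Algebra.smul_def, mul_pow]
        _ = (algebraMap (↥A) Ω d₀) ^ (n - 1) * ((algebraMap (↥A) Ω d₀) * b ^ n) := by
            rw [← mul_assoc, ← pow_succ, Nat.sub_add_cancel hn]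
        _ = algebraMap (↥A) Ω (d₀ ^ (n - 1) * c₀) := by
            rw [_root_.map_mul, map_pow, hc₀, Algebra.smul_def]
    have := hroot_closed (d₀ • b)
      ((FractionalIdeal.mem_one_iff (↥A)⁰).mpr ⟨d₀ ^ (n - 1) * c₀, hpow.symm⟩)
    obtain ⟨e, he⟩ := (FractionalIdeal.mem_one_iff (↥A)⁰).mp this
    exact ⟨e, he⟩
  set J : FractionalIdeal (↥A)⁰ Ω := ⟨Submodule.span (↥A) S, hJfrac⟩ with hJ
  -- powers of elements of set powers of `S`
  have hSpow : ∀ m : ℕ, ∀ y ∈ (S ^ m : Set Ω), y ^ n ∈ (I : FractionalIdeal (↥A)⁰ Ω) ^ m := by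
    intro m
    induction m with
    | zero =>
      intro y hy
      rw [pow_zero] at hy ⊢
      rw [Set.mem_one] at hy
      subst hy
      simpa using FractionalIdeal.one_mem_one (↥A)⁰
    | succ m ih =>
      intro y hy
      rw [pow_succ] at hy ⊢
      obtain ⟨a, ha, b, hb, rfl⟩ := hy
      rw [mul_pow]
      exact FractionalIdeal.mul_mem_mul (ih a ha) hb
  have hJn : J ^ n = (I : FractionalIdeal (↥A)⁰ Ω) := by
    apply le_antisymm
    · rw [← FractionalIdeal.coe_le_coe, FractionalIdeal.coe_pow]
      show (Submodule.span (↥A) S) ^ n ≤ _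
      rw [Submodule.span_pow, Submodule.span_le]
      exact fun y hy => FractionalIdeal.mem_coe.mpr (key y (hSpow n y hy))
    · rw [← FractionalIdeal.coe_le_coe, FractionalIdeal.coe_pow]
      intro y hy
      obtain ⟨x, hx⟩ := IsAlgClosed.exists_pow_nat_eq y (n := n) (by omega)
      have hxS : x ∈ S := by
        rw [hS]
        exact Set.mem_setOf.mpr (hx ▸ (FractionalIdeal.mem_coe.mp hy))
      rw [← hx]
      exact Submodule.pow_mem_pow _ (Submodule.subset_span hxS) n
  have hJu : IsUnit J := (isUnit_pow_iff hn0).mp (hJn ▸ I.isUnit)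
  have hunit : hJu.unit ^ n = I :=
    Units.ext (by rw [Units.val_pow_eq_pow_val, IsUnit.unit_spec, hJn])
  exact ⟨ClassGroup.mk Ω hJu.unit, by rw [← map_pow, hunit]⟩
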